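/- For fixed x > 0, the function c ↦ log₂(1 + 2c·log x_small)/log₂(1 + 2c·log x_big) is monotone; more generally, for 0 < a₁ < a₂ the function w(x) = log(1 + a₁x)/log(1 + a₂x) is monotonically increasing on (0,∞), and for a₁ > a₂ > 0 it is monotonically decreasing on (0,∞). -/

import Mathlib

open Real Set

lemma phi_strictMono : StrictMonoOn (fun t : ℝ => t * Real.log t / (t - 1)) (Set.Ioi 1) := by
  apply strictMonoOn_of_deriv_pos (convex_Ioi 1)
  · apply ContinuousOn.div
    · exact continuousOn_id.mul (continuousOn_id.log (fun t ht => by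
        simp only [mem_Ioi] at ht; intro h; simp only [id_eq] at h; rw [h] at ht; norm_num at ht))
    · exact (continuous_id.sub continuous_const).continuousOn
    · intro t ht; simp only [mem_Ioi] at ht; intro h; nlinarith
  · intro t ht
    rw [interior_Ioi] at ht
    have ht1 : (1:ℝ) < t := ht
    have ht0 : (0:ℝ) < t := by linarith
    have hN : HasDerivAt (fun t : ℝ => t * Real.log t) (1 * Real.log t + t * t⁻¹) t :=
      (hasDerivAt_id t).mul (Real.hasDerivAt_log (ne_of_gt ht0))
    have hD : HasDerivAt (fun t : ℝ => t - 1) 1 t := (hasDerivAt_id t).sub_const 1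
    have hq := hN.div hD (by intro h; rw [sub_eq_zero] at h; linarith)
    rw [HasDerivAt.deriv (f := fun t : ℝ => t * Real.log t / (t - 1)) hq]
    have htt : t * t⁻¹ = 1 := mul_inv_cancel₀ (ne_of_gt ht0)
    have hlog : Real.log t < t - 1 := Real.log_lt_sub_one_of_pos ht0 (ne_of_gt ht1)
    apply div_pos
    · rw [htt]; nlinarith
    · have : (0:ℝ) < t - 1 := by linarith
      positivity

lemma log_affine_hasDerivAt (a x : ℝ) (h : 0 < 1 + a * x) :
    HasDerivAt (fun x => Real.log (1 + a * x)) (a / (1 + a * x)) x := by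
  have h1 : HasDerivAt (fun x : ℝ => 1 + a * x) a x := by
    simpa using ((hasDerivAt_id x).const_mul a).const_add 1
  simpa [div_eq_mul_inv, mul_comm] using h1.log (ne_of_gt h)

lemma ratio_strictMono (a1 a2 : ℝ) (h1 : 0 < a1) (hlt : a1 < a2) :
    StrictMonoOn (fun x => Real.log (1 + a1 * x) / Real.log (1 + a2 * x)) (Set.Ioi (0 : ℝ)) := by
  have h2 : 0 < a2 := lt_trans h1 hlt
  apply strictMonoOn_of_deriv_pos (convex_Ioi 0)
  · apply ContinuousOn.div
    · exact (continuous_const.add (continuous_const.mul continuous_id)).continuousOn.log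
        (fun x hx => by
          simp only [mem_Ioi] at hx
          have : (0:ℝ) < 1 + a1 * x := by positivity
          exact ne_of_gt this)
    · exact (continuous_const.add (continuous_const.mul continuous_id)).continuousOn.log
        (fun x hx => by
          simp only [mem_Ioi] at hx
          have : (0:ℝ) < 1 + a2 * x := by positivity
          exact ne_of_gt this)
    · intro x hx
      simp only [mem_Ioi] at hx
      exact ne_of_gt (Real.log_pos (by nlinarith))
  · intro x hx
    rw [interior_Ioi] at hx
    simp only [mem_Ioi] at hx
    have hu : (1:ℝ) < 1 + a1 * x := by nlinarith
    have hv : (1:ℝ) < 1 + a2 * x := by nlinarith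
    have hu0 : (0:ℝ) < 1 + a1 * x := by linarith
    have hv0 : (0:ℝ) < 1 + a2 * x := by linarith
    have hlogv : 0 < Real.log (1 + a2 * x) := Real.log_pos hv
    have hgd := log_affine_hasDerivAt a1 x hu0
    have hhd := log_affine_hasDerivAt a2 x hv0
    have hq := hgd.div hhd (ne_of_gt hlogv)
    rw [HasDerivAt.deriv (f := fun x => Real.log (1 + a1 * x) / Real.log (1 + a2 * x)) hq]
    apply div_pos
    · -- a1/(1+a1x) * log(1+a2x) - log(1+a1x) * (a2/(1+a2x)) > 0
      have hphi := phi_strictMono (mem_Ioi.mpr hu) (mem_Ioi.mpr hv) (by nlinarith)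
      simp only at hphi
      rw [div_lt_div_iff₀ (by linarith) (by linarith)] at hphi
      -- hphi : (1+a1x)*log(1+a1x)*(1+a2x-1) < (1+a2x)*log(1+a2x)*(1+a1x-1)
      have key : a2 * ((1 + a1 * x) * Real.log (1 + a1 * x)) <
          a1 * ((1 + a2 * x) * Real.log (1 + a2 * x)) := by
        have hx' : (0:ℝ) < x := hx
        nlinarith [hphi]
      have heq : a1 / (1 + a1 * x) * Real.log (1 + a2 * x) -
          Real.log (1 + a1 * x) * (a2 / (1 + a2 * x)) =
          (a1 * ((1 + a2 * x) * Real.log (1 + a2 * x)) -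
            a2 * ((1 + a1 * x) * Real.log (1 + a1 * x))) / ((1 + a1 * x) * (1 + a2 * x)) := by
        field_simp
      rw [heq]
      apply div_pos (by linarith) (by positivity)
    · positivity

theorem stmt_10 (a1 a2 : ℝ) (h1 : 0 < a1) (h2 : 0 < a2) :
    (a1 < a2 → StrictMonoOn (fun x => Real.log (1 + a1 * x) / Real.log (1 + a2 * x))
      (Set.Ioi (0 : ℝ))) ∧
    (a2 < a1 → StrictAntiOn (fun x => Real.log (1 + a1 * x) / Real.log (1 + a2 * x))
      (Set.Ioi (0 : ℝ))) := by
  constructor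
  · exact fun hlt => ratio_strictMono a1 a2 h1 hlt
  · intro hlt
    have hmono := ratio_strictMono a2 a1 h2 hlt
    intro x hx y hy hxy
    have hgx := hmono hx hy hxy
    simp only [mem_Ioi] at hx hy
    have hux : 0 < Real.log (1 + a1 * x) := Real.log_pos (by nlinarith)
    have hvx : 0 < Real.log (1 + a2 * x) := Real.log_pos (by nlinarith)
    have hvy : 0 < Real.log (1 + a2 * y) := Real.log_pos (by nlinarith)
    have huy : 0 < Real.log (1 + a1 * y) := Real.log_pos (by nlinarith)
    have hgxpos : 0 < Real.log (1 + a2 * x) / Real.log (1 + a1 * x) := div_pos hvx hux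
    simp only
    rw [div_lt_div_iff₀ hvy hvx]
    simp only at hgx
    rw [div_lt_div_iff₀ hux huy] at hgx
    nlinarith [hgx]
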